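/- Causal parallel rule: if f : (ℝ^n)^ω → (ℝ^m)^ω is causally differentiable at σ and h : (ℝ^p)^ω → (ℝ^q)^ω is causally differentiable at τ, then the parallel composite f ∥ h : (ℝ^{n+p})^ω → (ℝ^{m+q})^ω, acting as f on the first components and h on the second, is causally differentiable at (σ,τ) with derivative D f(σ) ∥ D h(τ). -/

import Mathlib

/-- A stream function is *causal* if initial segments of length `k+1` of the
input determine initial segments of length `k+1` of the output. -/
def Causal {A B : Type*} (f : (ℕ → A) → (ℕ → B)) : Prop :=
  ∀ σ τ : ℕ → A, ∀ k : ℕ, (∀ i ≤ k, σ i = τ i) → ∀ i ≤ k, f σ i = f τ i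

/-- Extend a finite word to a stream (padding with the first letter). -/
def extW {A : Type*} {k : ℕ} (w : Fin (k+1) → A) : ℕ → A :=
  fun n => if h : n < k+1 then w ⟨n, h⟩ else w 0

/-- The `k`-th pointwise approximant (unrolling) of a causal function. -/
def U {A B : Type*} (f : (ℕ → A) → (ℕ → B)) (k : ℕ) (w : Fin (k+1) → A) : B :=
  f (extW w) k

/-- The `k`-th stringwise approximant (truncation) of a causal function. -/
def T {A B : Type*} (f : (ℕ → A) → (ℕ → B)) (k : ℕ) (w : Fin (k+1) → A) :
    Fin (k+1) → B := fun i => f (extW w) i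

/-- The initial segment `σ_{0:k}` of a stream, as a finite word. -/
def init {A : Type*} (σ : ℕ → A) (k : ℕ) : Fin (k+1) → A := fun i => σ i

/-- A causal function is differentiable at a stream `σ` when all of its
pointwise approximants are differentiable at `σ_{0:k}`. -/
def CausalDiffAt {E F : Type*} [NormedAddCommGroup E] [NormedSpace ℝ E]
    [NormedAddCommGroup F] [NormedSpace ℝ F]
    (f : (ℕ → E) → ℕ → F) (σ : ℕ → E) : Prop :=
  ∀ k, DifferentiableAt ℝ (U f k) (init σ k)

/-- `L` is the causal derivative of `f` at `σ`: the `k`-th pointwise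
approximant of `L` is the Jacobian of `U_k(f)` at `σ_{0:k}`. -/
def IsCausalDerivAt {E F : Type*} [NormedAddCommGroup E] [NormedSpace ℝ E]
    [NormedAddCommGroup F] [NormedSpace ℝ F]
    (f : (ℕ → E) → ℕ → F) (σ : ℕ → E) (L : (ℕ → E) → ℕ → F) : Prop :=
  ∀ (Δ : ℕ → E) (k : ℕ), L Δ k = fderiv ℝ (U f k) (init σ k) (init Δ k)

/-- The parallel composite of two stream functions. -/
def par {E E' F F' : Type*} (f : (ℕ → E) → ℕ → F) (h : (ℕ → E') → ℕ → F')
    (ρ : ℕ → E × E') : ℕ → F × F' :=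
  fun k => (f (fun i => (ρ i).1) k, h (fun i => (ρ i).2) k)

section Aux
variable {E E' : Type*} [NormedAddCommGroup E] [NormedSpace ℝ E]
  [NormedAddCommGroup E'] [NormedSpace ℝ E'] {k : ℕ}

noncomputable def P1 (k : ℕ) : (Fin (k+1) → E × E') →L[ℝ] (Fin (k+1) → E) :=
  ContinuousLinearMap.pi fun i => (ContinuousLinearMap.fst ℝ E E').comp (ContinuousLinearMap.proj i)

noncomputable def P2 (k : ℕ) : (Fin (k+1) → E × E') →L[ℝ] (Fin (k+1) → E') :=
  ContinuousLinearMap.pi fun i => (ContinuousLinearMap.snd ℝ E E').comp (ContinuousLinearMap.proj i)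

lemma extW_P1 (w : Fin (k+1) → E × E') :
    (fun i => (extW w i).1) = extW (P1 k w) := by
  funext i; simp [extW, P1, apply_dite Prod.fst]

lemma extW_P2 (w : Fin (k+1) → E × E') :
    (fun i => (extW w i).2) = extW (P2 k w) := by
  funext i; simp [extW, P2, apply_dite Prod.snd]

lemma U_par {F F' : Type*} (f : (ℕ → E) → ℕ → F) (h : (ℕ → E') → ℕ → F') (k : ℕ) :
    U (par f h) k = fun w => (U f k (P1 k w), U h k (P2 k w)) := by
  funext w
  simp only [U, par, extW_P1, extW_P2]

end Aux


/-- Causal parallel rule. -/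
theorem causal_parallel_rule {n m p q : ℕ}
    (f : (ℕ → (Fin n → ℝ)) → ℕ → (Fin m → ℝ))
    (h : (ℕ → (Fin p → ℝ)) → ℕ → (Fin q → ℝ))
    (hf : Causal f) (hh : Causal h)
    (σ : ℕ → Fin n → ℝ) (τ : ℕ → Fin p → ℝ) (Df Dh : _)
    (hdf : CausalDiffAt f σ) (hdh : CausalDiffAt h τ)
    (hDf : IsCausalDerivAt f σ Df) (hDh : IsCausalDerivAt h τ Dh) :
    CausalDiffAt (par f h) (fun k => (σ k, τ k)) ∧
    IsCausalDerivAt (par f h) (fun k => (σ k, τ k)) (par Df Dh) := by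

  set ρ : ℕ → (Fin n → ℝ) × (Fin p → ℝ) := fun k => (σ k, τ k) with hρ
  have hP1 : ∀ k (Δ : ℕ → (Fin n → ℝ) × (Fin p → ℝ)),
      P1 k (init Δ k) = init (fun i => (Δ i).1) k := fun _ _ => rfl
  have hP2 : ∀ k (Δ : ℕ → (Fin n → ℝ) × (Fin p → ℝ)),
      P2 k (init Δ k) = init (fun i => (Δ i).2) k := fun _ _ => rfl
  have key : ∀ k, HasFDerivAt (U (par f h) k)
      (((fderiv ℝ (U f k) (init σ k)).comp (P1 k)).prod
        ((fderiv ℝ (U h k) (init τ k)).comp (P2 k))) (init ρ k) := by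
    intro k
    have e := U_par (E := Fin n → ℝ) (E' := Fin p → ℝ) f h k
    rw [e]
    set Q1 := P1 (E := Fin n → ℝ) (E' := Fin p → ℝ) k with hQ1
    set Q2 := P2 (E := Fin n → ℝ) (E' := Fin p → ℝ) k with hQ2
    have h1 : HasFDerivAt (fun w : Fin (k+1) → (Fin n → ℝ) × (Fin p → ℝ) => U f k (Q1 w))
        ((fderiv ℝ (U f k) (init σ k)).comp Q1) (init ρ k) :=
      HasFDerivAt.comp (init ρ k)
        (show HasFDerivAt (U f k) (fderiv ℝ (U f k) (init σ k)) (Q1 (init ρ k)) from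
          (hdf k).hasFDerivAt) Q1.hasFDerivAt
    have h2 : HasFDerivAt (fun w : Fin (k+1) → (Fin n → ℝ) × (Fin p → ℝ) => U h k (Q2 w))
        ((fderiv ℝ (U h k) (init τ k)).comp Q2) (init ρ k) :=
      HasFDerivAt.comp (init ρ k)
        (show HasFDerivAt (U h k) (fderiv ℝ (U h k) (init τ k)) (Q2 (init ρ k)) from
          (hdh k).hasFDerivAt) Q2.hasFDerivAt
    exact HasFDerivAt.prodMk h1 h2
  refine ⟨fun k => (key k).differentiableAt, fun Δ k => ?_⟩
  rw [(key k).fderiv]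
  simp only [ContinuousLinearMap.prod_apply, ContinuousLinearMap.comp_apply, hP1, hP2]
  simp [par, hDf (fun i => (Δ i).1) k, hDh (fun i => (Δ i).2) k]
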